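/- For n ≥ 0, s ≥ 0, and μ ≠ 1, T_n^{(r,k)}(x|λ) = (1/(1-μ)^s) Σ_{m=0}^{n} [C(n,m) Σ_{j=0}^{s} C(s,j) (-μ)^{s-j} T_{n-m}^{(r,k)}(j|λ)] H_m^{(s)}(x|μ). -/

import Mathlib

open PowerSeries Finset

/-- e^{xt} as a formal power series. -/
noncomputable def expX (x : ℂ) : PowerSeries ℂ := rescale x (exp ℂ)

/-- 1 - e^{-t} as a formal power series. -/
noncomputable def oneSubExpNeg : PowerSeries ℂ := 1 - rescale (-1) (exp ℂ)

/-- Li_k(1-e^{-t}) = Σ_{m≥1} (1-e^{-t})^m / m^k as a formal power series. -/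
noncomputable def polyLogC (k : ℤ) : PowerSeries ℂ :=
  mk fun n => ∑ m ∈ Finset.Icc 1 n, (coeff (R := ℂ) n (oneSubExpNeg ^ m)) * ((m : ℂ) ^ k)⁻¹

/-- integer power of a power series (inverse via `PowerSeries.inv`). -/
noncomputable def zpowS (f : PowerSeries ℂ) (r : ℤ) : PowerSeries ℂ :=
  f ^ r.toNat * (f⁻¹) ^ (-r).toNat

/-- (1-λ)/(e^t-λ). -/
noncomputable def feBase (l : ℂ) : PowerSeries ℂ :=
  C (R := ℂ) (1 - l) * (exp ℂ - C (R := ℂ) l)⁻¹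

/-- exponential generating function Σ f(n) t^n/n!. -/
noncomputable def GF (f : ℕ → ℂ) : PowerSeries ℂ := mk fun n => f n / n.factorial

/-- Stirling numbers of the second kind: (e^t-1)^m = m! Σ_l S2(l,m) t^l/l!. -/
noncomputable def S2 (n m : ℕ) : ℂ :=
  (n.factorial : ℂ) / (m.factorial : ℂ) * coeff (R := ℂ) n ((exp ℂ - 1) ^ m)

lemma GF_mul (f g : ℕ → ℂ) : GF f * GF g
    = GF (fun n => ∑ m ∈ range (n+1), (n.choose m : ℂ) * f m * g (n - m)) := by
  ext n
  rw [coeff_mul]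
  simp only [GF, coeff_mk, Finset.sum_div]
  rw [Finset.Nat.sum_antidiagonal_eq_sum_range_succ_mk]
  refine Finset.sum_congr rfl fun m hm => ?_
  have hmn : m ≤ n := Nat.lt_succ_iff.mp (Finset.mem_range.mp hm)
  rw [Nat.cast_choose ℂ hmn]
  have h1 : (m.factorial : ℂ) ≠ 0 := Nat.cast_ne_zero.mpr m.factorial_ne_zero
  have h2 : ((n-m).factorial : ℂ) ≠ 0 := Nat.cast_ne_zero.mpr (n-m).factorial_ne_zero
  have h3 : (n.factorial : ℂ) ≠ 0 := Nat.cast_ne_zero.mpr n.factorial_ne_zero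
  field_simp

lemma expX_eq_GF (x : ℂ) : expX x = GF (fun n => x ^ n) := by
  ext n
  simp [expX, GF, coeff_rescale, coeff_exp, div_eq_mul_inv, mul_comm]

lemma GF_const_mul (c : ℂ) (f : ℕ → ℂ) : GF (fun n => c * f n) = C (R := ℂ) c * GF f := by
  ext n
  simp [GF, coeff_C_mul, mul_div_assoc]

lemma GF_sum {ι : Type*} (t : Finset ι) (F : ι → ℕ → ℂ) :
    GF (fun p => ∑ j ∈ t, F j p) = ∑ j ∈ t, GF (F j) := by
  ext n
  simp [GF, Finset.sum_div]

lemma oneSubExpNeg_ne_zero : oneSubExpNeg ≠ 0 := by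
  intro h
  have h1 := congrArg (coeff (R := ℂ) 1) h
  simp [oneSubExpNeg, coeff_rescale, coeff_exp] at h1

lemma expX_nat (j : ℕ) : expX (j : ℂ) = exp ℂ ^ j := by
  rw [exp_pow_eq_rescale_exp]; rfl

theorem stmt12 (lam mu : ℂ) (hlam : lam ≠ 1) (hmu : mu ≠ 1) (r k : ℤ) (s : ℕ)
    (T Hs : ℕ → ℂ → ℂ)
    (hT : ∀ x : ℂ, oneSubExpNeg * GF (fun n => T n x)
        = zpowS (feBase lam) (r) * polyLogC (k) * expX x)
    (hHs : ∀ x : ℂ, GF (fun n => Hs n x) = feBase mu ^ s * expX x) :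
    ∀ (n : ℕ) (x : ℂ),
      T n x = (1 / (1 - mu) ^ s) * ∑ m ∈ range (n + 1),
        ((n.choose m : ℂ) * ∑ j ∈ range (s + 1),
          (s.choose j : ℂ) * (-mu) ^ (s - j) * T (n - m) j) * Hs m x := by
  intro n x
  have h1mu : (1 : ℂ) - mu ≠ 0 := sub_ne_zero.mpr (Ne.symm hmu)
  have h1mus : ((1 : ℂ) - mu) ^ s ≠ 0 := pow_ne_zero _ h1mu
  set F : PowerSeries ℂ := zpowS (feBase lam) r * polyLogC k with hF
  set A : ℕ → ℂ := fun p => ∑ j ∈ range (s + 1),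
      (s.choose j : ℂ) * (-mu) ^ (s - j) * T p j with hAdef
  set c : ℂ := 1 / (1 - mu) ^ s with hc
  -- invertibility of exp - C mu
  have hconst : constantCoeff (R := ℂ) (exp ℂ - C (R := ℂ) mu) ≠ 0 := by
    simpa [constantCoeff_exp] using h1mu
  have hinv : (exp ℂ - C (R := ℂ) mu)⁻¹ * (exp ℂ - C (R := ℂ) mu) = 1 :=
    PowerSeries.inv_mul_cancel _ hconst
  have hfe : feBase mu ^ s * (exp ℂ - C (R := ℂ) mu) ^ s = C (R := ℂ) ((1 - mu) ^ s) := by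
    rw [feBase, mul_pow, mul_assoc, ← mul_pow, hinv, one_pow, mul_one, ← map_pow]
  -- binomial identity
  have hbin : ∑ j ∈ range (s + 1), C (R := ℂ) ((s.choose j : ℂ) * (-mu) ^ (s - j)) * expX (j : ℂ)
      = (exp ℂ - C (R := ℂ) mu) ^ s := by
    have := add_pow (exp ℂ) (C (R := ℂ) (-mu)) s
    rw [show exp ℂ + C (R := ℂ) (-mu) = exp ℂ - C (R := ℂ) mu by rw [map_neg]; ring] at this
    rw [this]
    refine Finset.sum_congr rfl fun j _ => ?_
    rw [expX_nat, map_mul, map_natCast, ← map_pow]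
    ring
  -- EGF of A
  have hA : oneSubExpNeg * GF A = F * (exp ℂ - C (R := ℂ) mu) ^ s := by
    have : GF A = ∑ j ∈ range (s + 1),
        C (R := ℂ) ((s.choose j : ℂ) * (-mu) ^ (s - j)) * GF (fun p => T p (j : ℂ)) := by
      rw [hAdef]
      rw [show (fun p => ∑ j ∈ range (s + 1), (s.choose j : ℂ) * (-mu) ^ (s - j) * T p j)
        = fun p => ∑ j ∈ range (s + 1),
            (fun j p => ((s.choose j : ℂ) * (-mu) ^ (s - j)) * T p (j : ℂ)) j p by
          funext p; exact Finset.sum_congr rfl fun j _ => by ring]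
      rw [GF_sum]
      exact Finset.sum_congr rfl fun j _ => GF_const_mul _ _
    rw [this, Finset.mul_sum, ← hbin, Finset.mul_sum]
    refine Finset.sum_congr rfl fun j _ => ?_
    calc oneSubExpNeg * (C (R := ℂ) ((s.choose j : ℂ) * (-mu) ^ (s - j)) * GF (fun p => T p (j : ℂ)))
        = C (R := ℂ) ((s.choose j : ℂ) * (-mu) ^ (s - j)) * (oneSubExpNeg * GF (fun p => T p (j : ℂ))) := by ring
      _ = C (R := ℂ) ((s.choose j : ℂ) * (-mu) ^ (s - j)) * (F * expX (j : ℂ)) := by rw [hT]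
      _ = F * (C (R := ℂ) ((s.choose j : ℂ) * (-mu) ^ (s - j)) * expX (j : ℂ)) := by ring
  -- main GF identity
  have hkey : GF (fun n => c * ∑ m ∈ range (n + 1),
      ((n.choose m : ℂ) * A (n - m)) * Hs m x) = GF (fun n => T n x) := by
    apply mul_left_cancel₀ oneSubExpNeg_ne_zero
    have hconv : (fun n => ∑ m ∈ range (n + 1), ((n.choose m : ℂ) * A (n - m)) * Hs m x)
        = fun n => ∑ m ∈ range (n + 1), (n.choose m : ℂ) * Hs m x * A (n - m) := by
      funext p; exact Finset.sum_congr rfl fun m _ => by ring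
    rw [GF_const_mul, hconv, ← GF_mul, hHs, hT]
    calc oneSubExpNeg * (C (R := ℂ) c * (feBase mu ^ s * expX x * GF A))
        = C (R := ℂ) c * (feBase mu ^ s * (oneSubExpNeg * GF A)) * expX x := by ring
      _ = C (R := ℂ) c * (feBase mu ^ s * (F * (exp ℂ - C (R := ℂ) mu) ^ s)) * expX x := by rw [hA]
      _ = C (R := ℂ) c * (feBase mu ^ s * (exp ℂ - C (R := ℂ) mu) ^ s) * F * expX x := by ring
      _ = C (R := ℂ) c * C (R := ℂ) ((1 - mu) ^ s) * F * expX x := by rw [hfe]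
      _ = F * expX x := by
          rw [← map_mul, hc, one_div, inv_mul_cancel₀ h1mus, map_one, one_mul]
  -- extract coefficient n
  have h := congrArg (coeff (R := ℂ) n) hkey
  simp only [GF, coeff_mk] at h
  have hfact : (n.factorial : ℂ) ≠ 0 := Nat.cast_ne_zero.mpr n.factorial_ne_zero
  rw [div_eq_div_iff hfact hfact] at h
  exact (mul_right_cancel₀ hfact h).symm
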